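/- Let k be a field, and let A and B be finite-dimensional symmetric k-algebras. Let M be an A-B-bimodule inducing a separable equivalence between A and B. Let U be a finitely generated A-module and V a finitely generated B-module such that M*⊗_A U belongs to add(V) and M⊗_B V belongs to add(U). Then add(M⊗_B V) = add(U) and add(M*⊗_A U) = add(V). -/

import Mathlib

set_option linter.unusedSectionVars false

open TensorProduct MulOpposite

/-! ## A balanced tensor product over a (possibly noncommutative) `k`-algebra -/

/-- Scalar multiplication by `s' : S'` on `N`, as a `k`-linear map. -/
def smulAux (k : Type) [Field k] (N : Type) [AddCommGroup N] [Module k N]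
    (S' : Type) [Ring S'] [Module S' N] [SMulCommClass k S' N] (s' : S') : N →ₗ[k] N where
  toFun n := s' • n
  map_add' := smul_add s'
  map_smul' c n := (smul_comm c s' n).symm

section BalancedTensorProduct

variable (k : Type) [Field k]
variable (S : Type) [Ring S] [Algebra k S]
variable (R : Type) [Ring R]
variable (M : Type) [AddCommGroup M] [Module k M] [Module Sᵐᵒᵖ M] [Module R M]
  [SMulCommClass k R M] [SMulCommClass R Sᵐᵒᵖ M]
variable (N : Type) [AddCommGroup N] [Module k N] [Module S N]

/-- The submodule of `M ⊗[k] N` spanned by the differences `(m • s) ⊗ n - m ⊗ (s • n)`;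
since the set of these differences is stable under the action of `R` (which commutes with
the right `S`-action on `M`), this span coincides with the additive subgroup generated by
these differences, so the quotient below is the balanced tensor product `M ⊗[S] N`. -/
def balancedRel : Submodule R (M ⊗[k] N) :=
  Submodule.span R
    {z | ∃ (m : M) (s : S) (n : N), z = (op s • m) ⊗ₜ[k] n - m ⊗ₜ[k] (s • n)}

/-- The balanced tensor product `M ⊗[S] N` of a right `S`-module `M` and a left `S`-module
`N` over the `k`-algebra `S`, as a module over the ring `R` acting on `M` on the left
(commuting with the right `S`-action). -/
def BalancedTensor : Type := (M ⊗[k] N) ⧸ balancedRel k S R M N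

noncomputable instance : AddCommGroup (BalancedTensor k S R M N) :=
  inferInstanceAs (AddCommGroup ((M ⊗[k] N) ⧸ balancedRel k S R M N))

noncomputable instance : Module R (BalancedTensor k S R M N) :=
  inferInstanceAs (Module R ((M ⊗[k] N) ⧸ balancedRel k S R M N))

section RightAction

variable (S' : Type) [Ring S'] [Module S' N] [SMulCommClass S S' N] [SMulCommClass k S' N]

/-- Scalar multiplication by `s' : S'` on the second factor of `M ⊗[k] N`,
as an `R`-linear map. -/
noncomputable def rightSmulTensor (s' : S') : (M ⊗[k] N) →ₗ[R] (M ⊗[k] N) where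
  toFun := TensorProduct.map LinearMap.id (smulAux k N S' s')
  map_add' := map_add _
  map_smul' r z := by
    induction z using TensorProduct.induction_on with
    | zero => simp
    | tmul m n => simp [TensorProduct.smul_tmul']
    | add x y hx hy => simp only [map_add, smul_add, RingHom.id_apply] at hx hy ⊢; rw [hx, hy]

@[simp] lemma rightSmulTensor_tmul (s' : S') (m : M) (n : N) :
    rightSmulTensor k R M N S' s' (m ⊗ₜ[k] n) = m ⊗ₜ[k] (s' • n) := by
  simp [rightSmulTensor, smulAux]

lemma rightSmulTensor_le (s' : S') :
    balancedRel k S R M N ≤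
      Submodule.comap (rightSmulTensor k R M N S' s') (balancedRel k S R M N) := by
  rw [balancedRel, Submodule.span_le]
  rintro z ⟨m, s, n, rfl⟩
  simp only [SetLike.mem_coe, Submodule.mem_comap, map_sub, rightSmulTensor_tmul]
  rw [← smul_comm s s' n]
  exact Submodule.subset_span ⟨m, s, s' • n, rfl⟩

/-- Scalar multiplication by `s' : S'` on the balanced tensor product. -/
noncomputable def rightSmulQ (s' : S') :
    BalancedTensor k S R M N →ₗ[R] BalancedTensor k S R M N :=
  Submodule.mapQ _ _ (rightSmulTensor k R M N S' s') (rightSmulTensor_le k S R M N S' s')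

lemma rightSmulQ_mk (s' : S') (z : M ⊗[k] N) :
    rightSmulQ k S R M N S' s' (Submodule.Quotient.mk z) =
      Submodule.Quotient.mk (rightSmulTensor k R M N S' s' z) :=
  Submodule.mapQ_apply _ _ _ z

/-- The action of a ring `S'`, acting on `N` compatibly with the `S`-action, on the
balanced tensor product `M ⊗[S] N`.  (For `S' = S''ᵐᵒᵖ` with `S''` acting on the right of
`N`, this is the right `S''`-module structure on `M ⊗[S] N`.) -/
noncomputable instance : Module S' (BalancedTensor k S R M N) where
  smul s' x := rightSmulQ k S R M N S' s' x
  one_smul x := by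
    obtain ⟨z, rfl⟩ := Submodule.Quotient.mk_surjective _ x
    show rightSmulQ k S R M N S' 1 _ = _
    rw [rightSmulQ_mk]
    congr 1
    induction z using TensorProduct.induction_on with
    | zero => simp
    | tmul m n => simp
    | add x y hx hy => rw [map_add, hx, hy]
  mul_smul s' t' x := by
    obtain ⟨z, rfl⟩ := Submodule.Quotient.mk_surjective _ x
    show rightSmulQ k S R M N S' (s' * t') _ =
      rightSmulQ k S R M N S' s' (rightSmulQ k S R M N S' t' _)
    rw [rightSmulQ_mk, rightSmulQ_mk, rightSmulQ_mk]
    congr 1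
    induction z using TensorProduct.induction_on with
    | zero => simp
    | tmul m n => simp [mul_smul]
    | add x y hx hy => simp only [map_add]; rw [hx, hy]
  smul_zero s' := map_zero (rightSmulQ k S R M N S' s')
  smul_add s' x y := map_add (rightSmulQ k S R M N S' s') x y
  add_smul s' t' x := by
    obtain ⟨z, rfl⟩ := Submodule.Quotient.mk_surjective _ x
    show rightSmulQ k S R M N S' (s' + t') _ =
      rightSmulQ k S R M N S' s' _ + rightSmulQ k S R M N S' t' _
    rw [rightSmulQ_mk, rightSmulQ_mk, rightSmulQ_mk]
    erw [← Submodule.Quotient.mk_add]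
    congr 1
    induction z using TensorProduct.induction_on with
    | zero => simp
    | tmul m n => simp [add_smul, TensorProduct.tmul_add]
    | add x y hx hy => simp only [map_add] at hx hy ⊢; rw [hx, hy]; abel
  zero_smul x := by
    obtain ⟨z, rfl⟩ := Submodule.Quotient.mk_surjective _ x
    show rightSmulQ k S R M N S' 0 _ = _
    rw [rightSmulQ_mk]
    rw [show rightSmulTensor k R M N S' 0 z = 0 by
      induction z using TensorProduct.induction_on with
      | zero => simp
      | tmul m n => simp
      | add x y hx hy => rw [map_add, hx, hy, add_zero]]
    exact Submodule.Quotient.mk_zero _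

end RightAction

end BalancedTensorProduct

/-! ## The `k`-dual of a bimodule -/

section DualBimodule

variable (k : Type) [Field k]
variable (A : Type) [Ring A]
variable (B : Type) [Ring B]
variable (M : Type) [AddCommGroup M] [Module k M] [Module A M] [Module Bᵐᵒᵖ M]
  [SMulCommClass k A M] [SMulCommClass k Bᵐᵒᵖ M] [SMulCommClass A Bᵐᵒᵖ M]

/-- The left `B`-module structure on the `k`-dual `M* = Hom_k(M, k)` of a right `B`-module
`M`, given by `(b • f) m = f (m • b)`. -/
noncomputable instance dualLeftModule : Module B (M →ₗ[k] k) where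
  smul b f := f.comp (smulAux k M Bᵐᵒᵖ (op b))
  one_smul f := by
    ext m
    show f (op (1 : B) • m) = f m
    rw [op_one, one_smul]
  mul_smul b c f := by
    ext m
    show f (op (b * c) • m) = f (op c • op b • m)
    rw [op_mul, mul_smul]
  smul_zero b := by ext m; rfl
  smul_add b f g := by ext m; rfl
  add_smul b c f := by
    ext m
    show f (op (b + c) • m) = f (op b • m) + f (op c • m)
    rw [op_add, add_smul, map_add]
  zero_smul f := by
    ext m
    show f (op (0 : B) • m) = 0
    rw [op_zero, zero_smul, map_zero]

lemma dual_left_smul_apply (b : B) (f : M →ₗ[k] k) (m : M) :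
    (b • f) m = f (op b • m) := rfl

/-- The right `A`-module structure on the `k`-dual `M* = Hom_k(M, k)` of a left `A`-module
`M`, given by `(f • a) m = f (a • m)`, encoded as a left `Aᵐᵒᵖ`-module structure. -/
noncomputable instance dualRightModule : Module Aᵐᵒᵖ (M →ₗ[k] k) where
  smul x f := f.comp (smulAux k M A x.unop)
  one_smul f := by
    ext m
    show f ((1 : Aᵐᵒᵖ).unop • m) = f m
    rw [unop_one, one_smul]
  mul_smul x y f := by
    ext m
    show f ((x * y).unop • m) = f (y.unop • x.unop • m)
    rw [unop_mul, mul_smul]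
  smul_zero x := by ext m; rfl
  smul_add x f g := by ext m; rfl
  add_smul x y f := by
    ext m
    show f ((x + y).unop • m) = f (x.unop • m) + f (y.unop • m)
    rw [unop_add, add_smul, map_add]
  zero_smul f := by
    ext m
    show f ((0 : Aᵐᵒᵖ).unop • m) = 0
    rw [unop_zero, zero_smul, map_zero]

lemma dual_right_smul_apply (x : Aᵐᵒᵖ) (f : M →ₗ[k] k) (m : M) :
    (x • f) m = f (x.unop • m) := rfl

instance : SMulCommClass B Aᵐᵒᵖ (M →ₗ[k] k) where
  smul_comm b x f := by
    ext m
    show f (x.unop • op b • m) = f (op b • x.unop • m)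
    rw [smul_comm]

instance : SMulCommClass k B (M →ₗ[k] k) where
  smul_comm c b f := by
    ext m
    show c • f (op b • m) = c • f (op b • m)
    rfl

instance : SMulCommClass k Aᵐᵒᵖ (M →ₗ[k] k) where
  smul_comm c x f := by
    ext m
    show c • f (x.unop • m) = c • f (x.unop • m)
    rfl

end DualBimodule

/-! ## Symmetric algebras, `add`, and dominant dimension -/

/-- A finite-dimensional `k`-algebra `A` is symmetric if `A` is isomorphic to its `k`-dual
`A* = Hom_k(A,k)` as an `A`-`A`-bimodule, where the bimodule structure on `A*` is given by
`(a • f • b) (y) = f (b * y * a)`. -/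
def IsSymmetricKAlgebra (k A : Type) [Field k] [Ring A] [Algebra k A] : Prop :=
  ∃ e : A ≃ₗ[k] (A →ₗ[k] k), ∀ a x b y : A, e (a * x * b) y = e x (b * y * a)

/-- `X` belongs to `add Y`: `X` is isomorphic to a direct summand of a finite direct sum of
copies of the `R`-module `Y`. -/
def MemAdd (R : Type) [Ring R] (X : Type) [AddCommGroup X] [Module R X]
    (Y : Type) [AddCommGroup Y] [Module R Y] : Prop :=
  ∃ (n : ℕ) (f : X →ₗ[R] (Fin n → Y)) (g : (Fin n → Y) →ₗ[R] X), g.comp f = LinearMap.id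

/-- `R` admits an injective resolution `0 → R → I⁰ → I¹ → ⋯` of `R` as a right `R`-module
(i.e. as a module over `Rᵐᵒᵖ`) whose first `d` terms `I⁰, …, I^{d-1}` are projective.
The dominant dimension of `R` is the largest such `d`. -/
def HasInjectiveResolutionWithProjectivePrefix (R : Type) [Ring R] (d : ℕ) : Prop :=
  ∃ (I : ℕ → ModuleCat.{0} Rᵐᵒᵖ) (f₀ : R →ₗ[Rᵐᵒᵖ] I 0)
    (f : ∀ n : ℕ, (I n : Type) →ₗ[Rᵐᵒᵖ] I (n + 1)),
      Function.Injective f₀ ∧ Function.Exact f₀ (f 0) ∧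
      (∀ n : ℕ, Function.Exact (f n) (f (n + 1))) ∧
      (∀ n : ℕ, Module.Injective Rᵐᵒᵖ (I n)) ∧
      (∀ n : ℕ, n < d → Module.Projective Rᵐᵒᵖ (I n))

/-! ## Auxiliary material for the proof -/

set_option maxHeartbeats 1000000

section AuxGeneral

lemma memAdd_trans {R X Y Z : Type} [Ring R] [AddCommGroup X] [Module R X]
    [AddCommGroup Y] [Module R Y] [AddCommGroup Z] [Module R Z]
    (h1 : MemAdd R X Y) (h2 : MemAdd R Y Z) : MemAdd R X Z := by
  obtain ⟨n, f, g, hfg⟩ := h1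
  obtain ⟨m, f', g', hfg'⟩ := h2
  refine ⟨n * m,
    LinearMap.pi (fun j => (LinearMap.proj ((finProdFinEquiv.symm j).2)).comp
      ((f'.comp (LinearMap.proj ((finProdFinEquiv.symm j).1))).comp f)),
    g.comp (LinearMap.pi (fun i => g'.comp
      (LinearMap.pi (fun l => LinearMap.proj (R := R) (φ := fun _ : Fin (n*m) => Z) (finProdFinEquiv (i, l)))))), ?_⟩
  ext x
  have hg' : ∀ y, g' (f' y) = y := fun y => LinearMap.congr_fun hfg' y
  have hg : ∀ y, g (f y) = y := fun y => LinearMap.congr_fun hfg y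
  simp only [LinearMap.comp_apply, LinearMap.id_coe, id_eq]
  have key : (LinearMap.pi (fun i => g'.comp
      (LinearMap.pi (fun l => LinearMap.proj (R := R) (φ := fun _ : Fin (n*m) => Z) (finProdFinEquiv (i, l))))))
      ((LinearMap.pi (fun j => (LinearMap.proj ((finProdFinEquiv.symm j).2)).comp
        ((f'.comp (LinearMap.proj ((finProdFinEquiv.symm j).1))).comp f))) x) = f x := by
    funext i
    rw [LinearMap.pi_apply, LinearMap.comp_apply]
    have inner : (LinearMap.pi (fun l => LinearMap.proj (R := R) (φ := fun _ : Fin (n*m) => Z) (finProdFinEquiv (i, l))))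
        ((LinearMap.pi (fun j => (LinearMap.proj ((finProdFinEquiv.symm j).2)).comp
          ((f'.comp (LinearMap.proj ((finProdFinEquiv.symm j).1))).comp f))) x)
        = f' (f x i) := by
      funext l
      rw [LinearMap.pi_apply, LinearMap.proj_apply, LinearMap.pi_apply]
      simp only [LinearMap.comp_apply, LinearMap.proj_apply, Equiv.symm_apply_apply]
    rw [inner]
    exact hg' (f x i)
  rw [key]
  exact hg x

lemma span_le_addSubgroupClosure {R X : Type} [Ring R] [AddCommGroup X] [Module R X]
    (S : Set X) (hS : ∀ (r : R), ∀ s ∈ S, r • s ∈ S) :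
    ∀ x ∈ Submodule.span R S, x ∈ AddSubgroup.closure S := by
  let p : Submodule R X :=
    { carrier := AddSubgroup.closure S
      add_mem' := fun ha hb => add_mem ha hb
      zero_mem' := zero_mem _
      smul_mem' := by
        intro r x hx
        refine AddSubgroup.closure_induction
          (fun s hs => AddSubgroup.subset_closure (hS r s hs)) ?_ ?_ ?_ hx
        · rw [smul_zero]; exact zero_mem _
        · intro a b _ _ ha hb
          rw [smul_add]; exact add_mem ha hb
        · intro a _ ha
          rw [smul_neg]; exact neg_mem ha }
  intro x hx
  exact (Submodule.span_le.mpr (fun s hs => AddSubgroup.subset_closure hs) : _ ≤ p) hx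

end AuxGeneral

section BTAux

variable (k : Type) [Field k]
variable (S : Type) [Ring S] [Algebra k S]
variable (R : Type) [Ring R]
variable (M : Type) [AddCommGroup M] [Module k M] [Module Sᵐᵒᵖ M] [Module R M]
  [SMulCommClass k R M] [SMulCommClass R Sᵐᵒᵖ M]
variable (N : Type) [AddCommGroup N] [Module k N] [Module S N]

/-- The canonical projection onto the balanced tensor product, with the correct
head type. -/
noncomputable def BTmk : M ⊗[k] N → BalancedTensor k S R M N := Submodule.Quotient.mk

lemma BTmk_add (z z' : M ⊗[k] N) :
    BTmk k S R M N (z + z') = BTmk k S R M N z + BTmk k S R M N z' :=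
  Submodule.Quotient.mk_add _

lemma BTmk_zero : BTmk k S R M N 0 = 0 :=
  Submodule.Quotient.mk_zero _

lemma BTmk_smul (r : R) (z : M ⊗[k] N) :
    BTmk k S R M N (r • z) = r • BTmk k S R M N z :=
  Submodule.Quotient.mk_smul _ _ _

lemma BTmk_surjective : Function.Surjective (BTmk k S R M N) :=
  Submodule.Quotient.mk_surjective _

lemma BTmk_eq (z z' : M ⊗[k] N) (h : z - z' ∈ balancedRel k S R M N) :
    BTmk k S R M N z = BTmk k S R M N z' := by
  show Submodule.Quotient.mk z = Submodule.Quotient.mk z'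
  exact (Submodule.Quotient.eq _).mpr h

lemma BT_ind {C : BalancedTensor k S R M N → Prop}
    (h0 : C 0) (hadd : ∀ x y, C x → C y → C (x + y))
    (htmul : ∀ (m : M) (n : N), C (BTmk k S R M N (m ⊗ₜ[k] n))) :
    ∀ t, C t := by
  intro t
  obtain ⟨z, rfl⟩ := BTmk_surjective k S R M N t
  induction z using TensorProduct.induction_on with
  | zero => rw [BTmk_zero]; exact h0
  | tmul m n => exact htmul m n
  | add x y hx hy => rw [BTmk_add]; exact hadd _ _ hx hy

variable (S' : Type) [Ring S'] [Module S' N] [SMulCommClass S S' N] [SMulCommClass k S' N]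

lemma BT_smul_mk_tmul (s' : S') (m : M) (nn : N) :
    s' • BTmk k S R M N (m ⊗ₜ[k] nn) = BTmk k S R M N (m ⊗ₜ[k] (s' • nn)) := by
  show rightSmulQ k S R M N S' s' (Submodule.Quotient.mk _) = Submodule.Quotient.mk _
  rw [rightSmulQ_mk, rightSmulTensor_tmul]

end BTAux

section MainConstruction

variable (k : Type) [Field k]
variable (A' : Type) [Ring A'] [Algebra k A']
variable (B' : Type) [Ring B'] [Algebra k B']
variable (P : Type) [AddCommGroup P] [Module k P] [Module A' P] [Module B'ᵐᵒᵖ P]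
  [IsScalarTower k A' P] [IsScalarTower k B'ᵐᵒᵖ P] [SMulCommClass A' B'ᵐᵒᵖ P]
variable (Q : Type) [AddCommGroup Q] [Module k Q] [Module B' Q] [Module A'ᵐᵒᵖ Q]
  [IsScalarTower k B' Q] [SMulCommClass k A'ᵐᵒᵖ Q] [SMulCommClass B' A'ᵐᵒᵖ Q]
variable (U' : Type) [AddCommGroup U'] [Module k U'] [Module A' U'] [IsScalarTower k A' U']
variable (V' : Type) [AddCommGroup V'] [Module k V'] [Module B' V'] [IsScalarTower k B' V']
variable (n : ℕ)
variable (pm : BalancedTensor k A' B' Q U' →ₗ[B'] (Fin n → V'))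
variable (qm : (Fin n → V') →ₗ[B'] BalancedTensor k A' B' Q U')
variable (g₁ : BalancedTensor k B' A' P Q →ₗ[A'] A')
variable (hgc : ∀ (t : BalancedTensor k B' A' P Q) (a : A'), g₁ (op a • t) = g₁ t * a)

lemma mk_smul_QU (s : B') (φ : Q) (u : U') :
    BTmk k A' B' Q U' ((s • φ) ⊗ₜ[k] u) = s • BTmk k A' B' Q U' (φ ⊗ₜ[k] u) := by
  rw [← TensorProduct.smul_tmul', BTmk_smul]

lemma mk_alg_QU (c : k) (φ : Q) (u : U') :
    BTmk k A' B' Q U' ((c • φ) ⊗ₜ[k] u) = algebraMap k B' c • BTmk k A' B' Q U' (φ ⊗ₜ[k] u) := by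
  rw [← mk_smul_QU, algebraMap_smul]

lemma mk_rel_QU (a : A') (φ : Q) (u : U') :
    BTmk k A' B' Q U' ((op a • φ) ⊗ₜ[k] u) = BTmk k A' B' Q U' (φ ⊗ₜ[k] (a • u)) :=
  BTmk_eq k A' B' Q U' _ _ (Submodule.subset_span ⟨φ, a, u, rfl⟩)

lemma mk_rel_PQ (b : B') (m : P) (φ : Q) :
    BTmk k B' A' P Q ((op b • m) ⊗ₜ[k] φ) = BTmk k B' A' P Q (m ⊗ₜ[k] (b • φ)) :=
  BTmk_eq k B' A' P Q _ _ (Submodule.subset_span ⟨m, b, φ, rfl⟩)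

lemma mk_rel_PV (b : B') (m : P) (v : V') :
    BTmk k B' A' P V' ((op b • m) ⊗ₜ[k] v) = BTmk k B' A' P V' (m ⊗ₜ[k] (b • v)) :=
  BTmk_eq k B' A' P V' _ _ (Submodule.subset_span ⟨m, b, v, rfl⟩)

lemma opsmul_mk_PQ (a : A') (m : P) (φ : Q) :
    op a • BTmk k B' A' P Q (m ⊗ₜ[k] φ) = BTmk k B' A' P Q (m ⊗ₜ[k] (op a • φ)) :=
  BT_smul_mk_tmul k B' A' P Q A'ᵐᵒᵖ (op a) m φ

/-- The map `m ⊗ φ ↦ mk (m ⊗ (p (mk (φ ⊗ u)) i))` on the plain tensor product. -/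
noncomputable def lam (u : U') (i : Fin n) :
    (P ⊗[k] Q) →ₗ[A'] BalancedTensor k B' A' P V' where
  toFun := TensorProduct.liftAddHom
    (AddMonoidHom.mk' (fun m => AddMonoidHom.mk'
        (fun φ => BTmk k B' A' P V' (m ⊗ₜ[k] (pm (BTmk k A' B' Q U' (φ ⊗ₜ[k] u)) i)))
        (fun φ φ' => by
          beta_reduce
          rw [TensorProduct.add_tmul, BTmk_add, map_add, Pi.add_apply,
            TensorProduct.tmul_add, BTmk_add]))
      (fun m m' => by
        ext φ
        simp only [AddMonoidHom.mk'_apply, AddMonoidHom.add_apply]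
        rw [TensorProduct.add_tmul, BTmk_add]))
    (by
      intro c m φ
      simp only [AddMonoidHom.mk'_apply]
      rw [mk_alg_QU k A' B' Q U', map_smul, Pi.smul_apply, algebraMap_smul,
        TensorProduct.tmul_smul, ← TensorProduct.smul_tmul'])
  map_add' := map_add _
  map_smul' := by
    intro a z
    simp only [RingHom.id_apply]
    induction z using TensorProduct.induction_on with
    | zero => rw [smul_zero, map_zero, smul_zero]
    | tmul m φ =>
      simp only [TensorProduct.smul_tmul', TensorProduct.liftAddHom_tmul, AddMonoidHom.mk'_apply]
      rw [← BTmk_smul, TensorProduct.smul_tmul']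
    | add x y hx hy => simp only [smul_add, map_add, hx, hy]

lemma lam_tmul (u : U') (i : Fin n) (m : P) (φ : Q) :
    lam k A' B' P Q U' V' n pm u i (m ⊗ₜ[k] φ)
      = BTmk k B' A' P V' (m ⊗ₜ[k] (pm (BTmk k A' B' Q U' (φ ⊗ₜ[k] u)) i)) := rfl

/-- The induced map `P ⊗_{B'} Q → P ⊗_{B'} V'`. -/
noncomputable def lamQ (u : U') (i : Fin n) :
    BalancedTensor k B' A' P Q →ₗ[A'] BalancedTensor k B' A' P V' :=
  Submodule.liftQ _ (lam k A' B' P Q U' V' n pm u i) (by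
    rw [balancedRel, Submodule.span_le]
    rintro z ⟨m, s, φ, rfl⟩
    simp only [SetLike.mem_coe, LinearMap.mem_ker, map_sub]
    rw [lam_tmul, lam_tmul, mk_smul_QU, map_smul, Pi.smul_apply, ← mk_rel_PV, sub_self])

lemma lamQ_mk (u : U') (i : Fin n) (z : P ⊗[k] Q) :
    lamQ k A' B' P Q U' V' n pm u i (BTmk k B' A' P Q z)
      = lam k A' B' P Q U' V' n pm u i z :=
  Submodule.liftQ_apply _ _ _

lemma lamQ_add_u (u u' : U') (i : Fin n) (t : BalancedTensor k B' A' P Q) :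
    lamQ k A' B' P Q U' V' n pm (u + u') i t
      = lamQ k A' B' P Q U' V' n pm u i t + lamQ k A' B' P Q U' V' n pm u' i t := by
  induction t using BT_ind with
  | h0 => rw [map_zero, map_zero, map_zero, add_zero]
  | hadd x y hx hy =>
    rw [map_add, map_add, map_add, hx, hy]
    abel
  | htmul m φ =>
    rw [lamQ_mk, lamQ_mk, lamQ_mk, lam_tmul, lam_tmul, lam_tmul,
      TensorProduct.tmul_add, BTmk_add, map_add, Pi.add_apply,
      TensorProduct.tmul_add, BTmk_add]

lemma lamQ_smul_u (a : A') (u : U') (i : Fin n) (t : BalancedTensor k B' A' P Q) :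
    lamQ k A' B' P Q U' V' n pm (a • u) i t
      = lamQ k A' B' P Q U' V' n pm u i (op a • t) := by
  induction t using BT_ind with
  | h0 => rw [map_zero, smul_zero, map_zero]
  | hadd x y hx hy => rw [map_add, smul_add, map_add, hx, hy]
  | htmul m φ =>
    rw [lamQ_mk, lam_tmul, opsmul_mk_PQ, lamQ_mk, lam_tmul, mk_rel_QU]

/-- The pairing `φ ⊗ u ↦ g₁ (mk (m ⊗ φ)) • u` on the plain tensor product. -/
noncomputable def etaT (m : P) : Q ⊗[k] U' →+ U' :=
  TensorProduct.liftAddHom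
    (AddMonoidHom.mk' (fun φ => AddMonoidHom.mk'
        (fun u => g₁ (BTmk k B' A' P Q (m ⊗ₜ[k] φ)) • u)
        (fun u u' => smul_add _ _ _))
      (fun φ φ' => by
        ext u
        simp only [AddMonoidHom.mk'_apply, AddMonoidHom.add_apply]
        rw [TensorProduct.tmul_add, BTmk_add, map_add, add_smul]))
    (by
      intro c φ u
      simp only [AddMonoidHom.mk'_apply]
      have h1 : (m ⊗ₜ[k] (c • φ) : P ⊗[k] Q) = (algebraMap k A' c • m) ⊗ₜ[k] φ := by
        rw [algebraMap_smul, TensorProduct.smul_tmul]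
      rw [h1, ← TensorProduct.smul_tmul', BTmk_smul, map_smul,
        smul_eq_mul, mul_smul, algebraMap_smul, smul_comm])

lemma etaT_tmul (m : P) (φ : Q) (u : U') :
    etaT k A' B' P Q U' g₁ m (φ ⊗ₜ[k] u)
      = g₁ (BTmk k B' A' P Q (m ⊗ₜ[k] φ)) • u := rfl

lemma etaT_add_m (m m' : P) (z : Q ⊗[k] U') :
    etaT k A' B' P Q U' g₁ (m + m') z
      = etaT k A' B' P Q U' g₁ m z + etaT k A' B' P Q U' g₁ m' z := by
  induction z using TensorProduct.induction_on with
  | zero => rw [map_zero, map_zero, map_zero, add_zero]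
  | tmul φ u =>
    rw [etaT_tmul, etaT_tmul, etaT_tmul, TensorProduct.add_tmul,
      BTmk_add, map_add, add_smul]
  | add x y hx hy => rw [map_add, map_add, map_add, hx, hy]; abel

lemma etaT_smul_A (a : A') (m : P) (z : Q ⊗[k] U') :
    etaT k A' B' P Q U' g₁ (a • m) z = a • etaT k A' B' P Q U' g₁ m z := by
  induction z using TensorProduct.induction_on with
  | zero => rw [map_zero, map_zero, smul_zero]
  | tmul φ u =>
    rw [etaT_tmul, etaT_tmul, ← TensorProduct.smul_tmul', BTmk_smul,
      map_smul, smul_eq_mul, mul_smul]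
  | add x y hx hy => rw [map_add, map_add, hx, hy, smul_add]

lemma etaT_smul_k (c : k) (m : P) (z : Q ⊗[k] U') :
    etaT k A' B' P Q U' g₁ (c • m) z = c • etaT k A' B' P Q U' g₁ m z := by
  rw [← algebraMap_smul A' c m, etaT_smul_A, algebraMap_smul]

lemma etaT_opsmul (b : B') (m : P) (z : Q ⊗[k] U') :
    etaT k A' B' P Q U' g₁ (op b • m) z = etaT k A' B' P Q U' g₁ m (b • z) := by
  induction z using TensorProduct.induction_on with
  | zero => rw [map_zero, smul_zero, map_zero]
  | tmul φ u =>
    rw [etaT_tmul, TensorProduct.smul_tmul', etaT_tmul, mk_rel_PQ]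
  | add x y hx hy => rw [map_add, smul_add, map_add, hx, hy]

lemma etaT_algsmul (c : k) (m : P) (z : Q ⊗[k] U') :
    etaT k A' B' P Q U' g₁ m (algebraMap k B' c • z) = c • etaT k A' B' P Q U' g₁ m z := by
  rw [← etaT_opsmul]
  have h : op (algebraMap k B' c) • m = c • m := by
    rw [show op (algebraMap k B' c) = algebraMap k B'ᵐᵒᵖ c from rfl, algebraMap_smul]
  rw [h, etaT_smul_k]

lemma etaT_kills (hgk : ∀ (t : BalancedTensor k B' A' P Q) (a : A'), g₁ (op a • t) = g₁ t * a)
    (m : P) : ∀ x ∈ balancedRel k A' B' Q U', etaT k A' B' P Q U' g₁ m x = 0 := by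
  intro x hx
  have hstab : ∀ (b : B'), ∀ s ∈ {z : Q ⊗[k] U' |
      ∃ (φ : Q) (a : A') (u : U'), z = (op a • φ) ⊗ₜ[k] u - φ ⊗ₜ[k] (a • u)},
      b • s ∈ {z : Q ⊗[k] U' |
      ∃ (φ : Q) (a : A') (u : U'), z = (op a • φ) ⊗ₜ[k] u - φ ⊗ₜ[k] (a • u)} := by
    rintro b s ⟨φ, a, u, rfl⟩
    exact ⟨b • φ, a, u, by
      rw [smul_sub, TensorProduct.smul_tmul', TensorProduct.smul_tmul', smul_comm]⟩
  have hx' := span_le_addSubgroupClosure _ hstab x hx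
  refine AddSubgroup.closure_induction ?_ (map_zero _) ?_ ?_ hx'
  · rintro _ ⟨φ, a, u, rfl⟩
    rw [map_sub, etaT_tmul, etaT_tmul, ← opsmul_mk_PQ, hgk, mul_smul, sub_self]
  · intro a b _ _ ha hb
    rw [map_add, ha, hb, add_zero]
  · intro a _ ha
    rw [map_neg, ha, neg_zero]

/-- The induced pairing on the balanced tensor product `Q ⊗_{A'} U'`. -/
noncomputable def etaQ (m : P) : BalancedTensor k A' B' Q U' →+ U' := by
  refine AddMonoidHom.mk' (fun t => Quotient.liftOn' t (etaT k A' B' P Q U' g₁ m) ?_) ?_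
  · intro x y h
    have hmem : x - y ∈ balancedRel k A' B' Q U' :=
      (Submodule.quotientRel_def _).mp h
    have h0 := etaT_kills k A' B' P Q U' g₁ hgc m _ hmem
    rw [map_sub, sub_eq_zero] at h0
    exact h0
  · intro t t'
    obtain ⟨z, rfl⟩ := BTmk_surjective k A' B' Q U' t
    obtain ⟨z', rfl⟩ := BTmk_surjective k A' B' Q U' t'
    rw [← BTmk_add]
    show Quotient.liftOn' (Quotient.mk'' _) _ _
      = Quotient.liftOn' (Quotient.mk'' _) _ _ + Quotient.liftOn' (Quotient.mk'' _) _ _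
    rw [Quotient.liftOn'_mk'', Quotient.liftOn'_mk'', Quotient.liftOn'_mk'', map_add]

lemma etaQ_mk (m : P) (z : Q ⊗[k] U') :
    etaQ k A' B' P Q U' g₁ hgc m (BTmk k A' B' Q U' z)
      = etaT k A' B' P Q U' g₁ m z := rfl

lemma etaQ_add_m (m m' : P) (t : BalancedTensor k A' B' Q U') :
    etaQ k A' B' P Q U' g₁ hgc (m + m') t
      = etaQ k A' B' P Q U' g₁ hgc m t + etaQ k A' B' P Q U' g₁ hgc m' t := by
  obtain ⟨z, rfl⟩ := BTmk_surjective k A' B' Q U' t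
  rw [etaQ_mk, etaQ_mk, etaQ_mk, etaT_add_m]

lemma etaQ_smul_A (a : A') (m : P) (t : BalancedTensor k A' B' Q U') :
    etaQ k A' B' P Q U' g₁ hgc (a • m) t = a • etaQ k A' B' P Q U' g₁ hgc m t := by
  obtain ⟨z, rfl⟩ := BTmk_surjective k A' B' Q U' t
  rw [etaQ_mk, etaQ_mk, etaT_smul_A]

lemma etaQ_smul_k (c : k) (m : P) (t : BalancedTensor k A' B' Q U') :
    etaQ k A' B' P Q U' g₁ hgc (c • m) t = c • etaQ k A' B' P Q U' g₁ hgc m t := by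
  obtain ⟨z, rfl⟩ := BTmk_surjective k A' B' Q U' t
  rw [etaQ_mk, etaQ_mk, etaT_smul_k]

lemma etaQ_opsmul (b : B') (m : P) (t : BalancedTensor k A' B' Q U') :
    etaQ k A' B' P Q U' g₁ hgc (op b • m) t = etaQ k A' B' P Q U' g₁ hgc m (b • t) := by
  obtain ⟨z, rfl⟩ := BTmk_surjective k A' B' Q U' t
  rw [etaQ_mk, ← BTmk_smul, etaQ_mk, etaT_opsmul]

lemma etaQ_algsmul (c : k) (m : P) (t : BalancedTensor k A' B' Q U') :
    etaQ k A' B' P Q U' g₁ hgc m (algebraMap k B' c • t)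
      = c • etaQ k A' B' P Q U' g₁ hgc m t := by
  obtain ⟨z, rfl⟩ := BTmk_surjective k A' B' Q U' t
  rw [← BTmk_smul, etaQ_mk, etaQ_mk, etaT_algsmul]

/-- The map `m ⊗ v ↦ η_m (q (single i v))` on the plain tensor product. -/
noncomputable def kap (i : Fin n) : (P ⊗[k] V') →ₗ[A'] U' where
  toFun := TensorProduct.liftAddHom
    (AddMonoidHom.mk' (fun m => AddMonoidHom.mk'
        (fun v => etaQ k A' B' P Q U' g₁ hgc m (qm (Pi.single i v)))
        (fun v v' => by
          beta_reduce
          rw [← map_add, ← map_add, Pi.single_add]))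
      (fun m m' => by
        ext v
        simp only [AddMonoidHom.mk'_apply, AddMonoidHom.add_apply]
        rw [etaQ_add_m]))
    (by
      intro c m v
      simp only [AddMonoidHom.mk'_apply]
      rw [etaQ_smul_k]
      congr 1
      have h1 : Pi.single (M := fun _ : Fin n => V') i (c • v)
          = algebraMap k B' c • Pi.single (M := fun _ : Fin n => V') i v := by
        rw [algebraMap_smul, Pi.single_smul]
      rw [h1, map_smul, etaQ_algsmul])
  map_add' := map_add _
  map_smul' := by
    intro a z
    simp only [RingHom.id_apply]
    induction z using TensorProduct.induction_on with
    | zero => rw [smul_zero, map_zero, smul_zero]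
    | tmul m v =>
      simp only [TensorProduct.smul_tmul', TensorProduct.liftAddHom_tmul, AddMonoidHom.mk'_apply]
      rw [etaQ_smul_A]
    | add x y hx hy => simp only [smul_add, map_add, hx, hy]

lemma kap_tmul (i : Fin n) (m : P) (v : V') :
    kap k A' B' P Q U' V' n qm g₁ hgc i (m ⊗ₜ[k] v)
      = etaQ k A' B' P Q U' g₁ hgc m (qm (Pi.single i v)) := rfl

/-- The induced map `P ⊗_{B'} V' → U'`. -/
noncomputable def kapQ (i : Fin n) :
    BalancedTensor k B' A' P V' →ₗ[A'] U' :=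
  Submodule.liftQ _ (kap k A' B' P Q U' V' n qm g₁ hgc i) (by
    rw [balancedRel, Submodule.span_le]
    rintro z ⟨m, s, v, rfl⟩
    simp only [SetLike.mem_coe, LinearMap.mem_ker, map_sub]
    rw [kap_tmul, kap_tmul, etaQ_opsmul, ← map_smul, ← Pi.single_smul, sub_self])

lemma kapQ_mk (i : Fin n) (z : P ⊗[k] V') :
    kapQ k A' B' P Q U' V' n qm g₁ hgc i (BTmk k B' A' P V' z)
      = kap k A' B' P Q U' V' n qm g₁ hgc i z :=
  Submodule.liftQ_apply _ _ _

/-- The key computation: composing the two constructed maps gives `g₁ t • u`. -/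
lemma sum_kapQ_lamQ
    (hqp : qm.comp pm = LinearMap.id) (u : U') (t : BalancedTensor k B' A' P Q) :
    (∑ i : Fin n, kapQ k A' B' P Q U' V' n qm g₁ hgc i
        (lamQ k A' B' P Q U' V' n pm u i t)) = g₁ t • u := by
  induction t using BT_ind with
  | h0 =>
    rw [map_zero, zero_smul]
    refine Finset.sum_eq_zero (fun i _ => ?_)
    rw [map_zero, map_zero]
  | hadd x y hx hy =>
    have step : ∀ i : Fin n, kapQ k A' B' P Q U' V' n qm g₁ hgc i
        (lamQ k A' B' P Q U' V' n pm u i (x + y))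
        = kapQ k A' B' P Q U' V' n qm g₁ hgc i (lamQ k A' B' P Q U' V' n pm u i x)
          + kapQ k A' B' P Q U' V' n qm g₁ hgc i (lamQ k A' B' P Q U' V' n pm u i y) :=
      fun i => by rw [map_add, map_add]
    rw [Finset.sum_congr rfl (fun i _ => step i), Finset.sum_add_distrib, hx, hy,
      map_add, add_smul]
  | htmul m φ =>
    have step : ∀ i : Fin n, kapQ k A' B' P Q U' V' n qm g₁ hgc i
        (lamQ k A' B' P Q U' V' n pm u i (BTmk k B' A' P Q (m ⊗ₜ[k] φ)))
        = etaQ k A' B' P Q U' g₁ hgc m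
            (qm (Pi.single i (pm (BTmk k A' B' Q U' (φ ⊗ₜ[k] u)) i))) := by
      intro i
      rw [lamQ_mk, lam_tmul, kapQ_mk, kap_tmul]
    rw [Finset.sum_congr rfl (fun i _ => step i),
      ← map_sum (etaQ k A' B' P Q U' g₁ hgc m), ← map_sum qm, Finset.univ_sum_single]
    have hqpe : qm (pm (BTmk k A' B' Q U' (φ ⊗ₜ[k] u)))
        = BTmk k A' B' Q U' (φ ⊗ₜ[k] u) := LinearMap.congr_fun hqp _
    rw [hqpe, etaQ_mk, etaT_tmul]

/-- The abstract form of the main step: if `A'` is a direct summand of `P ⊗_{B'} Q` as a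
bimodule and `Q ⊗_{A'} U' ∈ add V'`, then `U' ∈ add (P ⊗_{B'} V')`. -/
theorem memAdd_main
    (hsep : ∃ (f : A' →ₗ[A'] BalancedTensor k B' A' P Q)
       (g : BalancedTensor k B' A' P Q →ₗ[A'] A'),
         (∀ (x a : A'), f (x * a) = op a • f x) ∧
         (∀ (t : BalancedTensor k B' A' P Q) (a : A'), g (op a • t) = g t * a) ∧
         g.comp f = LinearMap.id)
    (hMQ : MemAdd B' (BalancedTensor k A' B' Q U') V') :
    MemAdd A' U' (BalancedTensor k B' A' P V') := by
  obtain ⟨f₁, gg, hf₁, hg₁, hfg₁⟩ := hsep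
  obtain ⟨n, pm, qm, hqp⟩ := hMQ
  have he : ∀ a : A', op a • f₁ 1 = a • f₁ 1 := by
    intro a
    rw [← hf₁ 1 a, one_mul, ← map_smul, smul_eq_mul, mul_one]
  have hge : gg (f₁ 1) = 1 := LinearMap.congr_fun hfg₁ 1
  refine ⟨n,
    { toFun := fun u i => lamQ k A' B' P Q U' V' n pm u i (f₁ 1)
      map_add' := fun u u' => funext fun i =>
        lamQ_add_u k A' B' P Q U' V' n pm u u' i (f₁ 1)
      map_smul' := fun a u => funext fun i => by
        simp only [RingHom.id_apply, Pi.smul_apply]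
        rw [lamQ_smul_u, he, map_smul] },
    ∑ i : Fin n, (kapQ k A' B' P Q U' V' n qm gg hg₁ i).comp (LinearMap.proj i), ?_⟩
  ext u
  simp only [LinearMap.comp_apply, LinearMap.id_coe, id_eq, LinearMap.coe_mk,
    AddHom.coe_mk, LinearMap.sum_apply, LinearMap.proj_apply]
  rw [sum_kapQ_lamQ k A' B' P Q U' V' n pm qm gg hg₁ hqp u (f₁ 1), hge, one_smul]

end MainConstruction

/-! ## Statement -/

/-- Let `A`, `B` be finite-dimensional symmetric `k`-algebras and let `M` be an
`A`-`B`-bimodule inducing a separable equivalence between `A` and `B`.  Let `U` be a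
finitely generated `A`-module and `V` a finitely generated `B`-module such that
`M* ⊗_A U ∈ add V` and `M ⊗_B V ∈ add U`.  Then `add (M ⊗_B V) = add U` and
`add (M* ⊗_A U) = add V`. -/
theorem add_balancedTensor_eq_of_separableEquivalence
    (k : Type) [Field k]
    (A : Type) [Ring A] [Algebra k A] [FiniteDimensional k A]
    (B : Type) [Ring B] [Algebra k B] [FiniteDimensional k B]
    (hA : IsSymmetricKAlgebra k A) (hB : IsSymmetricKAlgebra k B)
    -- `M` is an `A`-`B`-bimodule, finitely generated projective on either side
    (M : Type) [AddCommGroup M] [Module k M] [Module A M] [Module Bᵐᵒᵖ M]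
    [IsScalarTower k A M] [IsScalarTower k Bᵐᵒᵖ M] [SMulCommClass A Bᵐᵒᵖ M]
    (hMfinA : Module.Finite A M) (hMprojA : Module.Projective A M)
    (hMfinB : Module.Finite Bᵐᵒᵖ M) (hMprojB : Module.Projective Bᵐᵒᵖ M)
    -- `A` is a direct summand of `M ⊗_B M*` as an `A`-`A`-bimodule
    (hsepA : ∃ (f : A →ₗ[A] BalancedTensor k B A M (M →ₗ[k] k))
       (g : BalancedTensor k B A M (M →ₗ[k] k) →ₗ[A] A),
         (∀ (x a : A), f (x * a) = op a • f x) ∧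
         (∀ (t : BalancedTensor k B A M (M →ₗ[k] k)) (a : A), g (op a • t) = g t * a) ∧
         g.comp f = LinearMap.id)
    -- `B` is a direct summand of `M* ⊗_A M` as a `B`-`B`-bimodule
    (hsepB : ∃ (f : B →ₗ[B] BalancedTensor k A B (M →ₗ[k] k) M)
       (g : BalancedTensor k A B (M →ₗ[k] k) M →ₗ[B] B),
         (∀ (x b : B), f (x * b) = op b • f x) ∧
         (∀ (t : BalancedTensor k A B (M →ₗ[k] k) M) (b : B), g (op b • t) = g t * b) ∧
         g.comp f = LinearMap.id)
    -- `U` is a finitely generated `A`-module with `A` as a direct summand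
    (U : Type) [AddCommGroup U] [Module k U] [Module A U] [IsScalarTower k A U]
    (hUfin : Module.Finite A U)
    -- `V` is a finitely generated `B`-module with `B` as a direct summand
    (V : Type) [AddCommGroup V] [Module k V] [Module B V] [IsScalarTower k B V]
    (hVfin : Module.Finite B V)
    -- `M* ⊗_A U ∈ add V` and `M ⊗_B V ∈ add U`
    (hMU : MemAdd B (BalancedTensor k A B (M →ₗ[k] k) U) V)
    (hMV : MemAdd A (BalancedTensor k B A M V) U) :
    (∀ (X : Type) [AddCommGroup X] [Module A X],
        MemAdd A X (BalancedTensor k B A M V) ↔ MemAdd A X U) ∧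
    (∀ (X : Type) [AddCommGroup X] [Module B X],
        MemAdd B X (BalancedTensor k A B (M →ₗ[k] k) U) ↔ MemAdd B X V) := by
  haveI : IsScalarTower k B (M →ₗ[k] k) := by
    constructor
    intro c b f
    ext m
    rw [dual_left_smul_apply, op_smul, smul_assoc, map_smul, LinearMap.smul_apply,
      dual_left_smul_apply]
  haveI : IsScalarTower k Aᵐᵒᵖ (M →ₗ[k] k) := by
    constructor
    intro c x f
    ext m
    rw [dual_right_smul_apply, unop_smul, smul_assoc, map_smul, LinearMap.smul_apply,
      dual_right_smul_apply]
  have hU : MemAdd A U (BalancedTensor k B A M V) :=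
    memAdd_main k A B M (M →ₗ[k] k) U V hsepA hMU
  have hV : MemAdd B V (BalancedTensor k A B (M →ₗ[k] k) U) :=
    memAdd_main k B A (M →ₗ[k] k) M V U hsepB hMV
  exact ⟨fun X _ _ => ⟨fun h => memAdd_trans h hMV, fun h => memAdd_trans h hU⟩,
    fun X _ _ => ⟨fun h => memAdd_trans h hMU, fun h => memAdd_trans h hV⟩⟩
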